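/- Let n : ℕ and A, ω, φ : Fin n → ℝ, where the frequencies are nonnegative and pairwise distinct: 0 ≤ ω j for all j, and ω j ≠ ω j' for j ≠ j'. Define the trigonometric polynomial p : ℝ → ℝ by p t = ∑ j, A j * Real.cos (ω j * t + φ j). If Filter.Tendsto p Filter.atTop (nhds 0), then p t = 0 for all t : ℝ. In particular, two trigonometric polynomials with the stated frequency properties that are asymptotically equal are equal, so the quasi-periodic representative of an asymptotic equivalence class of trajectories is unique. -/

import Mathlib

open Filter Real

/-- cosine is 1-Lipschitz. -/
lemma abs_cos_sub_cos_le (a b : ℝ) : |Real.cos a - Real.cos b| ≤ |a - b| := by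
  have h1 : |Real.sin ((a + b) / 2)| ≤ 1 := Real.abs_sin_le_one _
  have h2 : |Real.sin ((a - b) / 2)| ≤ |(a - b) / 2| := Real.abs_sin_le_abs
  have h3 : |(a - b) / 2| = |a - b| / 2 := by rw [abs_div]; norm_num
  rw [Real.cos_sub_cos, abs_mul, abs_mul, abs_neg, abs_two]
  nlinarith [abs_nonneg (Real.sin ((a + b) / 2)), abs_nonneg (Real.sin ((a - b) / 2)),
    abs_nonneg (a - b)]

/-- Recurrence: for any finite family of frequencies, there are arbitrarily large natural
number "almost periods". -/
lemma exists_almost_period (n : ℕ) (ω : Fin n → ℝ) {ε : ℝ} (hε : 0 < ε) (M : ℝ) :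
    ∃ s : ℕ, M ≤ (s : ℝ) ∧ ∀ j, ‖((ω j * s : ℝ) : AddCircle (2 * π))‖ < ε := by
  haveI : Fact (0 < 2 * π) := ⟨by positivity⟩
  set X := Fin n → AddCircle (2 * π)
  have u : ℕ → X := fun k j => ((ω j * k : ℝ) : AddCircle (2 * π))
  obtain ⟨x, φ', hφ', hconv⟩ := CompactSpace.tendsto_subseq
    (fun k : ℕ => (fun j => ((ω j * k : ℝ) : AddCircle (2 * π)) : X))
  -- the subsequence is Cauchy, so pick two far-apart indices that are ε-close
  have hcauchy := hconv.cauchySeq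
  rw [Metric.cauchySeq_iff] at hcauchy
  obtain ⟨N, hN⟩ := hcauchy ε hε
  obtain ⟨K, hK⟩ := exists_nat_ge M
  -- choose index m ≥ N with φ' m ≥ φ' N + K + M essentially
  have hmono : ∀ k : ℕ, k ≤ φ' k := fun k => hφ'.le_apply
  set m := N + K + φ' N with hm
  have hm1 : N ≤ m := by omega
  have hle : φ' N ≤ φ' m := hφ'.monotone (by omega)
  refine ⟨φ' m - φ' N, ?_, ?_⟩
  · have : (K : ℝ) ≤ ((φ' m - φ' N : ℕ) : ℝ) := by
      have : K ≤ φ' m - φ' N := by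
        have := hmono m
        omega
      exact_mod_cast this
    linarith
  · intro j
    have hd := hN m hm1 N le_rfl
    simp only [Function.comp] at hd
    have hdj : dist (((ω j * (φ' m) : ℝ) : AddCircle (2 * π)))
        (((ω j * (φ' N) : ℝ) : AddCircle (2 * π))) < ε :=
      lt_of_le_of_lt
        (dist_le_pi_dist (fun j => ((ω j * (φ' m) : ℝ) : AddCircle (2 * π)))
          (fun j => ((ω j * (φ' N) : ℝ) : AddCircle (2 * π))) j) hd
    rw [dist_eq_norm, ← AddCircle.coe_sub, ← mul_sub] at hdj
    have : (((φ' m : ℝ) - (φ' N : ℝ))) = ((φ' m - φ' N : ℕ) : ℝ) := by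
      push_cast [hle]; ring
    rwa [this] at hdj

/-- A trigonometric polynomial with nonnegative, pairwise distinct frequencies that tends to
zero at infinity is identically zero.  Consequently the quasi-periodic representative of an
asymptotic equivalence class of trajectories is unique. -/
theorem trig_poly_tendsto_zero_iff_zero
    (n : ℕ) (A ω φ : Fin n → ℝ)
    (hω : ∀ j, 0 ≤ ω j)
    (hdist : ∀ j j', j ≠ j' → ω j ≠ ω j')
    (p : ℝ → ℝ) (hp : p = fun t => ∑ j, A j * Real.cos (ω j * t + φ j))
    (hlim : Tendsto p atTop (nhds 0)) :
    ∀ t : ℝ, p t = 0 := by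
  intro t
  have key : ∀ ε : ℝ, 0 < ε → |p t| ≤ 0 + ε := by
    intro ε hε
    set C : ℝ := ∑ j, |A j| with hC
    have hC0 : 0 ≤ C := Finset.sum_nonneg fun j _ => abs_nonneg _
    set ε' : ℝ := ε / (2 * (C + 1)) with hε'
    have hε'0 : 0 < ε' := by positivity
    -- eventual smallness of p
    have hev : ∀ᶠ u in atTop, |p u| < ε / 2 := by
      have := Metric.tendsto_nhds.mp hlim (ε / 2) (by positivity)
      simpa [Real.dist_eq] using this
    obtain ⟨M, hM⟩ := (eventually_atTop).mp hev
    obtain ⟨s, hsM, hs⟩ := exists_almost_period n ω hε'0 (M - t)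
    -- |p (t + s) - p t| ≤ C * ε'
    have hterm : ∀ j : Fin n,
        |A j * Real.cos (ω j * (t + s) + φ j) - A j * Real.cos (ω j * t + φ j)|
          ≤ |A j| * ε' := by
      intro j
      have hsj := hs j
      rw [AddCircle.norm_eq] at hsj
      set δ : ℝ := ω j * s - round ((2 * π)⁻¹ * (ω j * s)) * (2 * π) with hδ
      have hδlt : |δ| < ε' := hsj
      have hcos : Real.cos (ω j * (t + s) + φ j) = Real.cos ((ω j * t + φ j) + δ) := by
        have : ω j * (t + s) + φ j
            = ((ω j * t + φ j) + δ) + (round ((2 * π)⁻¹ * (ω j * s)) : ℤ) * (2 * π) := by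
          rw [hδ]; push_cast; ring
        rw [this, Real.cos_add_int_mul_two_pi]
      rw [hcos, ← mul_sub, abs_mul]
      refine mul_le_mul_of_nonneg_left ?_ (abs_nonneg _)
      calc |Real.cos ((ω j * t + φ j) + δ) - Real.cos (ω j * t + φ j)|
          ≤ |(ω j * t + φ j) + δ - (ω j * t + φ j)| := _root_.abs_cos_sub_cos_le _ _
        _ = |δ| := by ring_nf
        _ ≤ ε' := hδlt.le
    have hdiff : |p (t + s) - p t| ≤ C * ε' := by
      rw [hp]
      simp only
      rw [← Finset.sum_sub_distrib]
      calc |∑ j, (A j * Real.cos (ω j * (t + s) + φ j) - A j * Real.cos (ω j * t + φ j))|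
          ≤ ∑ j, |A j * Real.cos (ω j * (t + s) + φ j) - A j * Real.cos (ω j * t + φ j)| :=
            Finset.abs_sum_le_sum_abs _ _
        _ ≤ ∑ j, |A j| * ε' := Finset.sum_le_sum fun j _ => hterm j
        _ = C * ε' := by rw [hC, Finset.sum_mul]
    have hsmall : |p (t + s)| < ε / 2 := hM (t + s) (by linarith)
    have hCε' : C * ε' ≤ ε / 2 := by
      rw [hε', mul_div_assoc']
      rw [div_le_div_iff₀ (by positivity) (by norm_num : (0:ℝ) < 2)]
      nlinarith
    have h4 := abs_sub_abs_le_abs_sub (p t) (p (t + s))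
    rw [abs_sub_comm] at h4
    linarith
  have : |p t| ≤ 0 := le_of_forall_pos_le_add key
  simpa [abs_nonpos_iff] using this
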